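/- For every z ∈ ℂ, the family n ↦ (1 − qⁿ·exp(z))·(1 − qⁿ·exp(−z))/(1 − qⁿ)² indexed by integers n ≥ 1 is multipliable, and the function σ is complex-differentiable (holomorphic) at every point of ℂ. -/

import Mathlib

/-- The nome `q = exp(2πiτ)`. -/
noncomputable def nome (τ : ℂ) : ℂ := Complex.exp (2 * Real.pi * Complex.I * τ)

/-- The Weierstrass-type sigma function
`σ(z) = (e^{z/2} - e^{-z/2}) ∏_{n ≥ 1} (1 - qⁿ eᶻ)(1 - qⁿ e^{-z})/(1 - qⁿ)²`,
where the product over integers `n ≥ 1` is encoded as a product over `n : ℕ`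
with exponent `n + 1`. -/
noncomputable def wsigma (τ : ℂ) (z : ℂ) : ℂ :=
  (Complex.exp (z / 2) - Complex.exp (-z / 2)) *
    ∏' n : ℕ, ((1 - nome τ ^ (n + 1) * Complex.exp z) *
      (1 - nome τ ^ (n + 1) * Complex.exp (-z)) / (1 - nome τ ^ (n + 1)) ^ 2)

open Finset Metric

lemma norm_nome_lt_one {τ : ℂ} (hτ : 0 < τ.im) : ‖nome τ‖ < 1 := by
  rw [nome, Complex.norm_exp]
  have hre : (2 * (Real.pi:ℂ) * Complex.I * τ).re = -(2 * Real.pi * τ.im) := by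
    simp [Complex.mul_re, Complex.mul_im]
  rw [hre]
  apply Real.exp_lt_one_iff.mpr
  have := Real.pi_pos
  nlinarith

lemma wsigma_main (τ : ℂ) (hτ : 0 < τ.im) (z₀ : ℂ) :
    (Multipliable fun n : ℕ =>
      (1 - nome τ ^ (n + 1) * Complex.exp z₀) * (1 - nome τ ^ (n + 1) * Complex.exp (-z₀)) /
        (1 - nome τ ^ (n + 1)) ^ 2) ∧ DifferentiableAt ℂ (wsigma τ) z₀ := by
  set q : ℂ := nome τ with hqdef
  have hq : ‖q‖ < 1 := norm_nome_lt_one hτ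
  have hq0 : 0 ≤ ‖q‖ := norm_nonneg q
  set f : ℕ → ℂ → ℂ := fun m z =>
    (1 - q ^ (m + 1) * Complex.exp z) * (1 - q ^ (m + 1) * Complex.exp (-z)) /
      (1 - q ^ (m + 1)) ^ 2 with hfdef
  -- basic facts about denominators
  have hqm : ∀ m : ℕ, ‖q ^ (m + 1)‖ ≤ ‖q‖ := by
    intro m
    rw [norm_pow]
    calc ‖q‖ ^ (m + 1) ≤ ‖q‖ ^ 1 := pow_le_pow_of_le_one hq0 hq.le (by omega)
    _ = ‖q‖ := pow_one _
  have hden_norm : ∀ m : ℕ, 1 - ‖q‖ ≤ ‖(1:ℂ) - q ^ (m + 1)‖ := by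
    intro m
    calc 1 - ‖q‖ ≤ ‖(1:ℂ)‖ - ‖q ^ (m+1)‖ := by rw [norm_one]; linarith [hqm m]
    _ ≤ ‖(1:ℂ) - q ^ (m + 1)‖ := norm_sub_norm_le _ _
  have hden : ∀ m : ℕ, (1:ℂ) - q ^ (m + 1) ≠ 0 := by
    intro m h
    have := hden_norm m
    rw [h, norm_zero] at this
    linarith
  -- f is differentiable everywhere
  have hfdiff : ∀ m : ℕ, Differentiable ℂ (f m) := by
    intro m
    apply Differentiable.div_const
    exact ((differentiable_const _).sub ((differentiable_const _).mul Complex.differentiable_exp)).mul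
      ((differentiable_const _).sub ((differentiable_const _).mul (Complex.differentiable_exp.comp
        differentiable_neg)))
  -- the ball
  set R : ℝ := ‖z₀‖ + 1 with hRdef
  have hR : 0 < R := by positivity
  set U : Set ℂ := ball (0:ℂ) R with hUdef
  have hz₀U : z₀ ∈ U := by simp [hUdef, hRdef]
  have hUopen : IsOpen U := isOpen_ball
  -- bound on exp on the ball
  have hexp_bound : ∀ z ∈ U, ∀ w : ℂ, (w = z ∨ w = -z) → ‖Complex.exp w‖ ≤ Real.exp R := by
    intro z hz w hw
    rw [Complex.norm_exp]
    apply Real.exp_le_exp.mpr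
    have hzn : ‖z‖ < R := by simpa [hUdef] using hz
    have : ‖w‖ = ‖z‖ := by rcases hw with rfl | rfl <;> simp
    calc w.re ≤ |w.re| := le_abs_self _
    _ ≤ ‖w‖ := Complex.abs_re_le_norm w
    _ ≤ R := by rw [this]; linarith
  -- the constant C
  set C : ℝ := (2 + 2 * Real.exp R) / (1 - ‖q‖) ^ 2 with hCdef
  have h1q : 0 < 1 - ‖q‖ := by linarith
  have hC : 0 < C := div_pos (by positivity) (by positivity)
  -- key identity and bound for f m z - 1
  have hfsub : ∀ m : ℕ, ∀ z ∈ U, ‖f m z - 1‖ ≤ ‖q‖ ^ (m+1) * C := by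
    intro m z hz
    have hprod : Complex.exp z * Complex.exp (-z) = 1 := by
      rw [← Complex.exp_add]; simp
    have hid : f m z - 1 = q ^ (m+1) * (2 - Complex.exp z - Complex.exp (-z)) /
        (1 - q ^ (m+1)) ^ 2 := by
      rw [hfdef]
      rw [div_sub_one (pow_ne_zero 2 (hden m))]
      congr 1
      linear_combination (q ^ (m+1)) ^ 2 * hprod
    have h1 : ‖(2:ℂ) - Complex.exp z - Complex.exp (-z)‖ ≤ 2 + 2 * Real.exp R := by
      have e1 := hexp_bound z hz z (Or.inl rfl)
      have e2 := hexp_bound z hz (-z) (Or.inr rfl)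
      calc ‖(2:ℂ) - Complex.exp z - Complex.exp (-z)‖
          ≤ ‖(2:ℂ) - Complex.exp z‖ + ‖Complex.exp (-z)‖ := norm_sub_le _ _
      _ ≤ ‖(2:ℂ)‖ + ‖Complex.exp z‖ + ‖Complex.exp (-z)‖ := by
          linarith [norm_sub_le (2:ℂ) (Complex.exp z)]
      _ ≤ 2 + 2 * Real.exp R := by
          simp only [Complex.norm_ofNat]
          linarith
    rw [hid, norm_div, norm_mul, norm_pow, norm_pow]
    calc ‖q‖ ^ (m+1) * ‖(2:ℂ) - Complex.exp z - Complex.exp (-z)‖ / ‖(1:ℂ) - q ^ (m+1)‖ ^ 2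
        ≤ ‖q‖ ^ (m+1) * (2 + 2 * Real.exp R) / (1 - ‖q‖) ^ 2 := by
          gcongr <;> first | exact h1 | exact hden_norm m | positivity
    _ = ‖q‖ ^ (m+1) * C := by rw [hCdef]; ring
  -- choose N₀ such that the tail factors are within 1/2 of 1 on U
  obtain ⟨N₀, hN₀⟩ : ∃ n : ℕ, ‖q‖ ^ n < (1/2) / C :=
    exists_pow_lt_of_lt_one (by positivity) hq
  have hN₀' : ‖q‖ ^ (N₀ + 1) * C ≤ 1/2 := by
    have h1 : ‖q‖ ^ (N₀ + 1) ≤ ‖q‖ ^ N₀ := pow_le_pow_of_le_one hq0 hq.le (by omega)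
    have h2 : ‖q‖ ^ N₀ * C ≤ 1/2 := by
      rw [← le_div_iff₀ hC]
      exact hN₀.le
    nlinarith [pow_nonneg hq0 N₀]
  -- tail bound
  have htail : ∀ n : ℕ, ∀ z ∈ U, ‖f (n + N₀) z - 1‖ ≤ ‖q‖ ^ n * (1/2) := by
    intro n z hz
    calc ‖f (n + N₀) z - 1‖ ≤ ‖q‖ ^ (n + N₀ + 1) * C := hfsub (n + N₀) z hz
    _ = ‖q‖ ^ n * (‖q‖ ^ (N₀ + 1) * C) := by rw [← mul_assoc, ← pow_add]; ring_nf
    _ ≤ ‖q‖ ^ n * (1/2) := by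
        apply mul_le_mul_of_nonneg_left hN₀' (pow_nonneg hq0 n)
  have htail' : ∀ n : ℕ, ∀ z ∈ U, ‖f (n + N₀) z - 1‖ ≤ 1/2 := by
    intro n z hz
    calc ‖f (n + N₀) z - 1‖ ≤ ‖q‖ ^ n * (1/2) := htail n z hz
    _ ≤ 1 * (1/2) := by
        apply mul_le_mul_of_nonneg_right (pow_le_one₀ hq0 hq.le) (by norm_num)
    _ = 1/2 := by ring
  -- the tail factors are in the slit plane and nonzero
  have hre : ∀ n : ℕ, ∀ z ∈ U, (1:ℝ)/2 ≤ (f (n + N₀) z).re := by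
    intro n z hz
    have h := htail' n z hz
    have h2 : |(f (n + N₀) z - 1).re| ≤ 1/2 := le_trans (Complex.abs_re_le_norm _) h
    have h3 : (f (n + N₀) z - 1).re = (f (n + N₀) z).re - 1 := by simp
    rw [h3] at h2
    cases abs_le.mp h2 with
    | intro hl hr => linarith
  have hslit : ∀ n : ℕ, ∀ z ∈ U, f (n + N₀) z ∈ Complex.slitPlane := by
    intro n z hz
    exact Complex.mem_slitPlane_iff.mpr (Or.inl (by linarith [hre n z hz]))
  have hne : ∀ n : ℕ, ∀ z ∈ U, f (n + N₀) z ≠ 0 := by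
    intro n z hz h
    have := hre n z hz
    rw [h] at this
    simp at this
    linarith
  -- logs of the tail
  set g : ℕ → ℂ → ℂ := fun n z => Complex.log (f (n + N₀) z) with hgdef
  set b : ℕ → ℝ := fun n => (3/2) * (‖q‖ ^ n * (1/2)) with hbdef
  have hb : Summable b := (summable_geometric_of_lt_one hq0 hq).mul_right _ |>.mul_left _
  have hgbound : ∀ n : ℕ, ∀ z ∈ U, ‖g n z‖ ≤ b n := by
    intro n z hz
    have h1 : f (n + N₀) z = 1 + (f (n + N₀) z - 1) := by ring
    rw [hgdef]
    simp only
    rw [h1]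
    calc ‖Complex.log (1 + (f (n + N₀) z - 1))‖ ≤ (3/2) * ‖f (n + N₀) z - 1‖ :=
        Complex.norm_log_one_add_half_le_self (htail' n z hz)
    _ ≤ b n := by
        rw [hbdef]
        have := htail n z hz
        simp only
        nlinarith
  have hgdiff : ∀ n : ℕ, DifferentiableOn ℂ (g n) U := by
    intro n
    intro z hz
    exact (((hfdiff (n + N₀)) z).clog (hslit n z hz)).differentiableWithinAt
  -- the sum of logs is differentiable on U
  set h : ℂ → ℂ := fun z => ∑' n, g n z with hhdef
  have hhdiff : DifferentiableOn ℂ h U :=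
    Complex.differentiableOn_tsum_of_summable_norm hb hgdiff hUopen (fun i w hw => hgbound i w hw)
  -- summability of logs at each point of U
  have hgsum : ∀ z ∈ U, Summable fun n => g n z := by
    intro z hz
    exact Summable.of_norm_bounded hb (fun n => hgbound n z hz)
  -- the tail product
  have Htail : ∀ z ∈ U, HasProd (fun n => f (n + N₀) z) (Complex.exp (h z)) := by
    intro z hz
    have h1 : HasProd (fun n => Complex.exp (g n z)) (Complex.exp (h z)) :=
      (hgsum z hz).hasSum.cexp
    have h2 : (fun n => Complex.exp (g n z)) = fun n => f (n + N₀) z :=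
      funext fun n => Complex.exp_log (hne n z hz)
    rwa [h2] at h1
  -- multipliability
  have hmult : ∀ z ∈ U, Multipliable fun n => f n z := by
    intro z hz
    exact Multipliable.comp_nat_add ⟨_, Htail z hz⟩
  constructor
  · exact hmult z₀ hz₀U
  · -- the product function agrees on U with a differentiable function
    have hsplit : ∀ z ∈ U, (∏' n, f n z) =
        (∏ i ∈ Finset.range N₀, f i z) * Complex.exp (h z) := by
      intro z hz
      rw [← Multipliable.prod_mul_tprod_nat_mul' (f := fun n => f n z) (k := N₀) ⟨_, Htail z hz⟩]
      congr 1
      exact (Htail z hz).tprod_eq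
    have hGdiff : DifferentiableOn ℂ (fun z =>
        (Complex.exp (z / 2) - Complex.exp (-z / 2)) *
          ((∏ i ∈ Finset.range N₀, f i z) * Complex.exp (h z))) U := by
      apply DifferentiableOn.mul
      · apply DifferentiableOn.sub <;>
        · apply Differentiable.differentiableOn
          apply Differentiable.cexp
          fun_prop
      · apply DifferentiableOn.mul
        · apply DifferentiableOn.fun_finsetProd
          intro i _
          exact ((hfdiff i)).differentiableOn
        · exact hhdiff.cexp
    have hAt : DifferentiableAt ℂ (fun z =>
        (Complex.exp (z / 2) - Complex.exp (-z / 2)) *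
          ((∏ i ∈ Finset.range N₀, f i z) * Complex.exp (h z))) z₀ :=
      hGdiff.differentiableAt (hUopen.mem_nhds hz₀U)
    apply hAt.congr_of_eventuallyEq
    filter_upwards [hUopen.mem_nhds hz₀U] with z hz
    rw [wsigma]
    rw [hsplit z hz]

theorem wsigma_multipliable_and_holomorphic (τ : ℂ) (hτ : 0 < τ.im) :
    (∀ z : ℂ, Multipliable fun n : ℕ =>
      (1 - nome τ ^ (n + 1) * Complex.exp z) * (1 - nome τ ^ (n + 1) * Complex.exp (-z)) /
        (1 - nome τ ^ (n + 1)) ^ 2) ∧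
    (∀ z : ℂ, DifferentiableAt ℂ (wsigma τ) z) :=
  ⟨fun z => (wsigma_main τ hτ z).1, fun z => (wsigma_main τ hτ z).2⟩
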